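/- Let a, b be natural numbers and B a nonempty finite subset of {1, ..., b}. Then the linear set a + B* = {a + k₁b₁ + ... + k_m b_m : k_i ∈ ℕ, B = {b₁,...,b_m}} is a finite union of arithmetic progressions c + d·ℕ where each c ≤ a + b³ and each d ≤ b. More precisely, letting b_m = max B, a + B* = ⋃ {c + b_m·ℕ : c ∈ a + B*, c ≤ a + b³}. -/

import Mathlib

open AddSubmonoid

lemma key_aux (b : ℕ) (B : Finset ℕ) (hB : B.Nonempty)
    (hsub : ∀ x ∈ B, 1 ≤ x ∧ x ≤ b) :
    ∀ n (l : Multiset ℕ), l.card = n → (∀ x ∈ l, x ∈ B) →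
      ∃ s' k, s' ∈ AddSubmonoid.closure (B : Set ℕ) ∧ s' ≤ b ^ 3 ∧ l.sum = s' + B.max' hB * k := by
  intro n
  induction n using Nat.strong_induction_on with
  | _ n ih =>
    intro l hcard hl
    set M := B.max' hB with hM
    have hMB : M ∈ B := B.max'_mem hB
    have hM1 : 1 ≤ M := (hsub M hMB).1
    have hMb : M ≤ b := (hsub M hMB).2
    by_cases h : l.card ≤ b ^ 2
    · refine ⟨l.sum, 0, multiset_sum_mem _ _ (fun x hx => subset_closure (hl x hx)), ?_, by simp⟩
      calc l.sum ≤ l.card • b := Multiset.sum_le_card_nsmul l b (fun x hx => (hsub x (hl x hx)).2)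
        _ = l.card * b := smul_eq_mul _ _
        _ ≤ b ^ 2 * b := Nat.mul_le_mul_right _ h
        _ = b ^ 3 := by ring
    · -- pigeonhole: some element has count > b ≥ M
      have hBcard : l.toFinset.card ≤ b := by
        have : l.toFinset ⊆ Finset.Icc 1 b := by
          intro x hx
          have := hsub x (hl x (Multiset.mem_toFinset.mp hx))
          simp [Finset.mem_Icc, this.1, this.2]
        simpa using Finset.card_le_card this
      obtain ⟨x, hxl, hxcount⟩ : ∃ x ∈ l.toFinset, b < l.count x := by
        by_contra hall
        push_neg at hall
        have : l.card ≤ l.toFinset.card * b := by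
          rw [← Multiset.toFinset_sum_count_eq]
          calc ∑ x ∈ l.toFinset, l.count x ≤ ∑ _x ∈ l.toFinset, b :=
                Finset.sum_le_sum (fun x hx => hall x hx)
            _ = l.toFinset.card * b := by simp [Finset.sum_const, mul_comm]
        have : l.card ≤ b * b := le_trans this (Nat.mul_le_mul_right _ hBcard)
        exact h (by nlinarith [this])
      have hle : Multiset.replicate M x ≤ l := by
        rw [Multiset.le_iff_count]
        intro a
        rw [Multiset.count_replicate]
        split
        · next heq => subst heq; omega
        · omega
      set l' := l - Multiset.replicate M x with hl'
      have hsum : l = l' + Multiset.replicate M x := (tsub_add_cancel_of_le hle).symm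
      have hcard' : l.card = l'.card + M := by
        rw [hsum]; simp
      have hl'sub : ∀ y ∈ l', y ∈ B := fun y hy =>
        hl y (Multiset.mem_of_le (Multiset.sub_le_self _ _) hy)
      obtain ⟨s', k, hs'mem, hs'le, hs'sum⟩ :=
        ih l'.card (by omega) l' rfl hl'sub
      refine ⟨s', k + x, hs'mem, hs'le, ?_⟩
      have : l.sum = l'.sum + M * x := by
        rw [hsum]; simp [Multiset.sum_replicate, smul_eq_mul]
      rw [this, hs'sum]; ring

theorem stmt0 (a b : ℕ) (B : Finset ℕ) (hB : B.Nonempty)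
    (hsub : ∀ x ∈ B, 1 ≤ x ∧ x ≤ b) :
    {n : ℕ | ∃ s ∈ AddSubmonoid.closure (B : Set ℕ), n = a + s} =
      ⋃ c ∈ {c : ℕ | (∃ s ∈ AddSubmonoid.closure (B : Set ℕ), c = a + s) ∧ c ≤ a + b ^ 3},
        {x : ℕ | ∃ k : ℕ, x = c + B.max' hB * k} := by
  ext n
  simp only [Set.mem_setOf_eq, Set.mem_iUnion, exists_prop]
  constructor
  · rintro ⟨s, hs, rfl⟩
    obtain ⟨l, hlB, hlsum⟩ := AddSubmonoid.exists_multiset_of_mem_closure hs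
    obtain ⟨s', k, hs'mem, hs'le, hs'sum⟩ := key_aux b B hB hsub l.card l rfl hlB
    exact ⟨a + s', ⟨⟨s', hs'mem, rfl⟩, by omega⟩, k, by omega⟩
  · rintro ⟨c, ⟨⟨s, hs, rfl⟩, _⟩, k, rfl⟩
    refine ⟨s + B.max' hB * k, ?_, by ring⟩
    have hMk : B.max' hB * k ∈ AddSubmonoid.closure (B : Set ℕ) := by
      have : k • B.max' hB ∈ AddSubmonoid.closure (B : Set ℕ) :=
        nsmul_mem (AddSubmonoid.subset_closure (B.max'_mem hB)) k
      simpa [smul_eq_mul, mul_comm] using this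
    exact AddSubmonoid.add_mem _ hs hMk
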